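/- Let A₃ = k[x,y,y⁻¹]/(y² - x³ - ax - b) with a ≠ 0 and Δ = 4a³ + 27b² ≠ 0, and let ∂₃ be the derivation with ∂₃(x) = -2y, ∂₃(y) = -(3x² + a). Then 15·y² ≡ Δ·y⁻² modulo the image of ∂₃, i.e., 15y² - Δy⁻² ∈ ∂₃(A₃). -/

import Mathlib

open MvPolynomial

/-- In `A₃ = k[x,y,y⁻¹]/(y² - x³ - ax - b)` (the localization at `y` of
`A₂ = k[x,y]/(y² - x³ - ax - b)`), with `a ≠ 0`, `Δ = 4a³ + 27b² ≠ 0` and the derivation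
`∂₃` with `∂₃(x) = -2y`, `∂₃(y) = -(3x² + a)`, one has `15·y² ≡ Δ·y⁻²` modulo the image
of `∂₃`, i.e. `15y² - Δy⁻² ∈ ∂₃(A₃)`. -/
theorem fifteen_ysq_eq_disc_yinvsq_mod_image (k : Type*) [Field k] [CharZero k] (a b : k)
    (ha : a ≠ 0) (hΔ : 4 * a ^ 3 + 27 * b ^ 2 ≠ 0)
    (A₂ : Type*) [CommRing A₂] [Algebra k A₂]
    (π : MvPolynomial (Fin 2) k →ₐ[k] A₂)
    (hπ : Function.Surjective π)
    (hker : RingHom.ker π.toRingHom =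
      Ideal.span {(X 1 ^ 2 - X 0 ^ 3 - C a * X 0 - C b : MvPolynomial (Fin 2) k)})
    (A₃ : Type*) [CommRing A₃] [Algebra k A₃] [Algebra A₂ A₃] [IsScalarTower k A₂ A₃]
    [IsLocalization.Away (π (X 1)) A₃]
    (D : Derivation k A₃ A₃)
    (hx : D (algebraMap A₂ A₃ (π (X 0))) = algebraMap A₂ A₃ (π (-2 * X 1)))
    (hy : D (algebraMap A₂ A₃ (π (X 1))) = algebraMap A₂ A₃ (π (-(3 * X 0 ^ 2 + C a)))) :
    15 * (algebraMap A₂ A₃ (π (X 1))) ^ 2 -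
        algebraMap k A₃ (4 * a ^ 3 + 27 * b ^ 2) *
          (IsLocalization.Away.invSelf (S := A₃) (π (X 1))) ^ 2 ∈
      Set.range ⇑D := by
  have halg : ∀ c : k, algebraMap A₂ A₃ (algebraMap k A₂ c) = algebraMap k A₃ c := fun c =>
    (IsScalarTower.algebraMap_apply k A₂ A₃ c).symm
  set x : A₃ := algebraMap A₂ A₃ (π (X 0)) with hxd
  set y : A₃ := algebraMap A₂ A₃ (π (X 1)) with hyd
  set z : A₃ := IsLocalization.Away.invSelf (S := A₃) (π (X 1)) with hzd
  set A : A₃ := algebraMap k A₃ a with hAd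
  set B : A₃ := algebraMap k A₃ b with hBd
  have hyz : y * z = 1 := IsLocalization.Away.mul_invSelf (π (X 1))
  have hrel : y ^ 2 = x ^ 3 + A * x + B := by
    have hmem : (X 1 ^ 2 - X 0 ^ 3 - C a * X 0 - C b : MvPolynomial (Fin 2) k) ∈
        RingHom.ker π.toRingHom := by
      rw [hker]; exact Ideal.mem_span_singleton_self _
    have h0 : π (X 1 ^ 2 - X 0 ^ 3 - C a * X 0 - C b) = 0 := hmem
    have h1 : algebraMap A₂ A₃ (π (X 1 ^ 2 - X 0 ^ 3 - C a * X 0 - C b)) = 0 := by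
      rw [h0, map_zero]
    simp only [map_sub, map_pow, map_mul, ← MvPolynomial.algebraMap_eq, AlgHom.commutes,
      halg] at h1
    rw [hxd, hyd, hAd, hBd]
    linear_combination h1
  have hDx : D x = -2 * y := by
    rw [hx]
    simp only [map_mul, map_neg, map_ofNat]
    rfl
  have hDy : D y = -(3 * x ^ 2 + A) := by
    rw [hy]
    simp only [map_neg, map_add, map_mul, map_pow, map_ofNat, ← MvPolynomial.algebraMap_eq,
      AlgHom.commutes, halg]
    rfl
  have hDz : D z = (3 * x ^ 2 + A) * z ^ 2 := by
    have h1 : D (y * z) = y • D z + z • D y := D.leibniz y z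
    rw [hyz, Derivation.map_one_eq_zero, smul_eq_mul, smul_eq_mul] at h1
    linear_combination (-z) * h1 - z ^ 2 * hDy + ((3 * x ^ 2 + A) * z ^ 2 - D z) * hyz -
      (3 * x ^ 2 + A) * z ^ 2 * hyz
  have hDnum : ∀ n : ℕ, D ((n : ℕ) : A₃) = 0 := fun n => by
    rw [← map_natCast (algebraMap k A₃) n]; exact D.map_algebraMap _
  have hD3 : D (3 : A₃) = 0 := by simpa using hDnum 3
  have hD4 : D (4 : A₃) = 0 := by simpa using hDnum 4
  have hD6 : D (6 : A₃) = 0 := by simpa using hDnum 6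
  have hD9 : D (9 : A₃) = 0 := by simpa using hDnum 9
  have hDA : D A = 0 := D.map_algebraMap a
  have hDB : D B = 0 := D.map_algebraMap b
  refine ⟨algebraMap k A₃ (-3) * (x * y) +
    (algebraMap k A₃ (-6 * a) * x ^ 2 + algebraMap k A₃ (9 * b) * x +
      algebraMap k A₃ (-4 * a ^ 2)) * z, ?_⟩
  simp only [map_add, Derivation.leibniz, Derivation.leibniz_pow, Derivation.map_algebraMap,
    smul_eq_mul, nsmul_eq_mul, hDx, hDy, hDz, map_mul, map_neg, map_ofNat, map_pow,
    mul_zero, zero_mul, add_zero, zero_add, Nat.cast_ofNat, hD3, hD4, hD6, hD9, hDA, hDB,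
    ← hAd, ← hBd]
  linear_combination ((-9 : A₃) + (18 * A * x - 27 * B) * z ^ 2) * hrel +
    (24 * A * x - 18 * B + (-18 * A * x + 27 * B) * (y * z + 1)) * hyz
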